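/- Let X be a complex Banach space, A a positive operator on X, ω > 0, θ > 0, and γ real with 1 − θ < γ < 1. Set β = 1 + (γ−1)/θ, so β ∈ (0,1). Then the Bochner integral ∫₀^∞ s^{-γ} (ω s^{θ} + A)^{-1} ds converges in L(X) and equals (1/θ) · ω^{-(1−γ)/θ} · (π / sin(πβ)) · A^{-β}, where A^{-β} = (sin(πβ)/π) ∫₀^∞ u^{-β}(u+A)^{-1} du. -/

import Mathlib

open MeasureTheory Real Set

noncomputable section

/-- `R` is a two-sided bounded inverse of `lam + A : D(A) → X`;
in particular `lam + A` is bijective from `D(A)` onto `X` with bounded inverse `R`. -/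
def ResolventAt {X : Type*} [NormedAddCommGroup X] [NormedSpace ℂ X]
    (A : X →ₗ.[ℂ] X) (lam : ℂ) (R : X →L[ℂ] X) : Prop :=
  (∀ x : A.domain, R (lam • (x : X) + A x) = x) ∧
  (∀ y : X, ∃ h : R y ∈ A.domain, lam • R y + A ⟨R y, h⟩ = y)

/-- `A` is a positive operator with constant `M ≥ 1` and resolvent family `R`. -/
structure IsPositive {X : Type*} [NormedAddCommGroup X] [NormedSpace ℂ X]
    (A : X →ₗ.[ℂ] X) (M : ℝ) (R : ℝ → X →L[ℂ] X) : Prop where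
  dense_domain : Dense (A.domain : Set X)
  closed_graph : IsClosed (A.graph : Set (X × X))
  one_le : 1 ≤ M
  resolvent : ∀ s : ℝ, 0 ≤ s → ResolventAt A (s : ℂ) (R s)
  bound : ∀ s : ℝ, 0 ≤ s → (1 + s) * ‖R s‖ ≤ M

/-- The Balakrishnan fractional power `A ^ (-α)`, expressed through the
resolvent family `R` of `A`:  `A⁻ᵅ = (sin (π α) / π) ∫₀^∞ s⁻ᵅ (s+A)⁻¹ ds`. -/
def negPow {X : Type*} [NormedAddCommGroup X] [NormedSpace ℂ X]
    (R : ℝ → X →L[ℂ] X) (α : ℝ) : X →L[ℂ] X :=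
  (Real.sin (π * α) / π) • ∫ s in Ioi (0 : ℝ), s ^ (-α) • R s

section AuxLemmas

variable {X : Type*} [NormedAddCommGroup X] [NormedSpace ℂ X]

lemma norm_R_le_div {A : X →ₗ.[ℂ] X} {M : ℝ} {R : ℝ → X →L[ℂ] X}
    (hA : IsPositive A M R) {s : ℝ} (hs : 0 ≤ s) : ‖R s‖ ≤ M / (1 + s) := by
  rw [le_div_iff₀ (by linarith : (0:ℝ) < 1 + s), mul_comm]
  exact hA.bound s hs

lemma norm_R_le {A : X →ₗ.[ℂ] X} {M : ℝ} {R : ℝ → X →L[ℂ] X}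
    (hA : IsPositive A M R) {s : ℝ} (hs : 0 ≤ s) : ‖R s‖ ≤ M := by
  refine (norm_R_le_div hA hs).trans ?_
  rw [div_le_iff₀ (by linarith : (0:ℝ) < 1 + s)]
  nlinarith [hA.one_le, (norm_nonneg (R s)).trans (norm_R_le_div hA hs)]

lemma resolvent_identity {A : X →ₗ.[ℂ] X} {M : ℝ} {R : ℝ → X →L[ℂ] X}
    (hA : IsPositive A M R) {s t : ℝ} (hs : 0 ≤ s) (ht : 0 ≤ t) (y : X) :
    R s y = ((t : ℂ) - s) • R t (R s y) + R t y := by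
  obtain ⟨hmem, hy⟩ := (hA.resolvent s hs).2 y
  have h1 := (hA.resolvent t ht).1 ⟨R s y, hmem⟩
  have hAy : (A ⟨R s y, hmem⟩ : X) = y - (s : ℂ) • R s y :=
    eq_sub_of_add_eq (by rw [add_comm]; exact hy)
  rw [hAy] at h1
  have h2 : (t : ℂ) • R s y + (y - (s : ℂ) • R s y)
      = ((t : ℂ) - s) • R s y + y := by
    rw [sub_smul]; abel
  rw [h2, map_add, _root_.map_smul] at h1
  exact h1.symm

lemma continuousOn_R {A : X →ₗ.[ℂ] X} {M : ℝ} {R : ℝ → X →L[ℂ] X}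
    (hA : IsPositive A M R) : ContinuousOn R (Ici (0:ℝ)) := by
  have key : ∀ s ∈ Ici (0:ℝ), ∀ t ∈ Ici (0:ℝ), ‖R s - R t‖ ≤ (M * M) * |s - t| := by
    intro s hs t ht
    have hM : 0 ≤ M := le_trans zero_le_one hA.one_le
    refine ContinuousLinearMap.opNorm_le_bound _ (by positivity) fun y => ?_
    have h := resolvent_identity hA hs ht y
    have : (R s - R t) y = ((t:ℂ) - s) • R t (R s y) := by
      rw [ContinuousLinearMap.sub_apply]
      conv_lhs => rw [h]
      abel
    rw [this, norm_smul]
    have habs : ‖(t:ℂ) - s‖ = |s - t| := by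
      rw [show (t:ℂ) - s = ((t - s : ℝ) : ℂ) by push_cast; ring, Complex.norm_real,
        Real.norm_eq_abs, abs_sub_comm]
    rw [habs]
    have h1 : ‖R t (R s y)‖ ≤ M * (M * ‖y‖) := by
      calc ‖R t (R s y)‖ ≤ ‖R t‖ * ‖R s y‖ := (R t).le_opNorm _
        _ ≤ M * (M * ‖y‖) := by
            have := (R s).le_opNorm y
            have hM : 0 ≤ M := le_trans zero_le_one hA.one_le
            have h2 : ‖R s y‖ ≤ M * ‖y‖ :=
              this.trans (mul_le_mul_of_nonneg_right (norm_R_le hA hs) (norm_nonneg y))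
            exact mul_le_mul (norm_R_le hA ht) h2 (norm_nonneg _) hM
    calc |s - t| * ‖R t (R s y)‖ ≤ |s - t| * (M * (M * ‖y‖)) :=
          mul_le_mul_of_nonneg_left h1 (abs_nonneg _)
      _ = M * M * |s - t| * ‖y‖ := by ring
  have hlip : LipschitzOnWith ⟨M * M, by nlinarith [hA.one_le]⟩ R (Ici (0:ℝ)) := by
    refine LipschitzOnWith.of_dist_le_mul fun s hs t ht => ?_
    rw [dist_eq_norm, dist_eq_norm, Real.norm_eq_abs]
    exact key s hs t ht
  exact hlip.continuousOn

end AuxLemmas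

set_option maxHeartbeats 1000000 in
/-- change of variables: for `ω, θ > 0` and `1 - θ < γ < 1`, with
`β = 1 + (γ-1)/θ ∈ (0,1)`,
`∫₀^∞ s⁻ᵞ (ω sᶿ + A)⁻¹ ds = (1/θ) ω^{-(1-γ)/θ} (π / sin (πβ)) A⁻ᵝ`. -/
theorem stmt15 {X : Type*} [NormedAddCommGroup X] [NormedSpace ℂ X] [CompleteSpace X]
    (M : ℝ) (A : X →ₗ.[ℂ] X) (R : ℝ → X →L[ℂ] X) (hA : IsPositive A M R)
    (ω θ γ : ℝ) (hω : 0 < ω) (hθ : 0 < θ) (hγ : 1 - θ < γ) (hγ' : γ < 1) :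
    (0 < 1 + (γ - 1) / θ ∧ 1 + (γ - 1) / θ < 1) ∧
    IntegrableOn (fun s : ℝ => s ^ (-γ) • R (ω * s ^ θ)) (Ioi 0) ∧
    ∫ s in Ioi (0 : ℝ), s ^ (-γ) • R (ω * s ^ θ)
      = ((1 / θ) * ω ^ (-((1 - γ) / θ)) * (π / Real.sin (π * (1 + (γ - 1) / θ)))) •
          negPow R (1 + (γ - 1) / θ) := by
  have hM : 0 ≤ M := le_trans zero_le_one hA.one_le
  set β : ℝ := 1 + (γ - 1) / θ with hβdef
  have hβ0 : 0 < β := by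
    have : (-1 : ℝ) < (γ - 1) / θ := by
      rw [lt_div_iff₀ hθ]; linarith
    simp only [hβdef]; linarith
  have hβ1 : β < 1 := by
    have : (γ - 1) / θ < 0 := div_neg_of_neg_of_pos (by linarith) hθ
    simp only [hβdef]; linarith
  -- continuity of the integrand on Ioi 0
  have hcont : ContinuousOn (fun s : ℝ => s ^ (-γ) • R (ω * s ^ θ)) (Ioi 0) := by
    have h1 : ContinuousOn (fun s : ℝ => s ^ (-γ)) (Ioi 0) := fun s hs =>
      ((Real.continuousAt_rpow_const s (-γ) (Or.inl (ne_of_gt hs))).continuousWithinAt)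
    have h2 : ContinuousOn (fun s : ℝ => ω * s ^ θ) (Ioi 0) :=
      continuousOn_const.mul fun s hs =>
        ((Real.continuousAt_rpow_const s θ (Or.inl (ne_of_gt hs))).continuousWithinAt)
    have h3 : ContinuousOn (fun s : ℝ => R (ω * s ^ θ)) (Ioi 0) := by
      refine (continuousOn_R hA).comp h2 fun s hs => ?_
      exact le_of_lt (mul_pos hω (Real.rpow_pos_of_pos hs θ))
    exact h1.smul h3
  -- integrability
  have hint : IntegrableOn (fun s : ℝ => s ^ (-γ) • R (ω * s ^ θ)) (Ioi 0) := by
    have hsplit : Ioc (0:ℝ) 1 ∪ Ioi 1 = Ioi 0 := Ioc_union_Ioi_eq_Ioi zero_le_one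
    rw [← hsplit]
    refine IntegrableOn.union ?_ ?_
    · -- on Ioc 0 1
      have hg : IntegrableOn (fun s : ℝ => M * s ^ (-γ)) (Ioc (0:ℝ) 1) := by
        have := intervalIntegral.intervalIntegrable_rpow' (a := 0) (b := 1)
          (by linarith : (-1:ℝ) < -γ)
        rw [intervalIntegrable_iff_integrableOn_Ioc_of_le zero_le_one] at this
        exact this.const_mul M
      refine Integrable.mono' hg
        ((hcont.mono Ioc_subset_Ioi_self).aestronglyMeasurable_of_isSeparable
          measurableSet_Ioc (TopologicalSpace.IsSeparable.of_separableSpace _)) ?_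
      refine (ae_restrict_iff' measurableSet_Ioc).2 (Filter.Eventually.of_forall fun s hs => ?_)
      rw [norm_smul (s ^ (-γ)) (R (ω * s ^ θ)), Real.norm_eq_abs, abs_of_nonneg (Real.rpow_nonneg hs.1.le _)]
      have hu : (0:ℝ) ≤ ω * s ^ θ := le_of_lt (mul_pos hω (Real.rpow_pos_of_pos hs.1 θ))
      calc s ^ (-γ) * ‖R (ω * s ^ θ)‖ ≤ s ^ (-γ) * M :=
            mul_le_mul_of_nonneg_left (norm_R_le hA hu) (Real.rpow_nonneg hs.1.le _)
        _ = M * s ^ (-γ) := mul_comm _ _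
    · -- on Ioi 1
      have hg : IntegrableOn (fun s : ℝ => (M / ω) * s ^ (-(γ + θ))) (Ioi (1:ℝ)) := by
        have := (integrableOn_Ioi_rpow_iff (t := 1) zero_lt_one).2
          (by linarith : -(γ + θ) < -1)
        exact this.const_mul _
      refine Integrable.mono' hg
        ((hcont.mono fun s (hs : s ∈ Ioi (1:ℝ)) => (mem_Ioi.2 (lt_trans zero_lt_one (mem_Ioi.1 hs)) : s ∈ Ioi (0:ℝ))).aestronglyMeasurable_of_isSeparable
          measurableSet_Ioi (TopologicalSpace.IsSeparable.of_separableSpace _)) ?_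
      refine (ae_restrict_iff' measurableSet_Ioi).2 (Filter.Eventually.of_forall fun s hs => ?_)
      have hs0 : (0:ℝ) < s := lt_trans zero_lt_one hs
      have hu : (0:ℝ) < ω * s ^ θ := mul_pos hω (Real.rpow_pos_of_pos hs0 θ)
      rw [norm_smul (s ^ (-γ)) (R (ω * s ^ θ)), Real.norm_eq_abs, abs_of_nonneg (Real.rpow_nonneg hs0.le _)]
      have hR : ‖R (ω * s ^ θ)‖ ≤ M / (ω * s ^ θ) := by
        refine (norm_R_le_div hA hu.le).trans ?_
        exact div_le_div_of_nonneg_left hM hu (by linarith)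
      calc s ^ (-γ) * ‖R (ω * s ^ θ)‖ ≤ s ^ (-γ) * (M / (ω * s ^ θ)) :=
            mul_le_mul_of_nonneg_left hR (Real.rpow_nonneg hs0.le _)
        _ = (M / ω) * s ^ (-(γ + θ)) := by
            rw [show -(γ + θ) = -γ + -θ by ring, Real.rpow_add hs0, Real.rpow_neg hs0.le θ]
            field_simp
  refine ⟨⟨hβ0, hβ1⟩, hint, ?_⟩
  have hsin : Real.sin (π * β) ≠ 0 :=
    ne_of_gt (Real.sin_pos_of_pos_of_lt_pi (mul_pos pi_pos hβ0)
      ((mul_lt_iff_lt_one_right pi_pos).2 hβ1))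
  have h1 : ∫ s in Ioi (0:ℝ), (θ * s ^ (θ - 1)) • ((s ^ θ) ^ (-β) • R (ω * s ^ θ))
      = ∫ u in Ioi (0:ℝ), u ^ (-β) • R (ω * u) :=
    integral_comp_rpow_Ioi_of_pos (g := fun u => u ^ (-β) • R (ω * u)) hθ
  have h2 : ∀ s ∈ Ioi (0:ℝ), (θ * s ^ (θ - 1)) • ((s ^ θ) ^ (-β) • R (ω * s ^ θ))
      = θ • (s ^ (-γ) • R (ω * s ^ θ)) := by
    intro s hs
    rw [smul_smul, smul_smul]
    congr 1
    rw [← Real.rpow_mul (le_of_lt hs) θ (-β), mul_assoc, ← Real.rpow_add hs]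
    congr 1
    rw [hβdef]
    field_simp
    ring
  have h3 : ∫ u in Ioi (0:ℝ), u ^ (-β) • R (ω * u)
      = ω ^ (β - 1) • ∫ u in Ioi (0:ℝ), u ^ (-β) • R u := by
    have hc := integral_comp_mul_left_Ioi (fun u => u ^ (-β) • R u) 0 hω
    rw [mul_zero] at hc
    have hpt : ∀ u ∈ Ioi (0:ℝ), u ^ (-β) • R (ω * u)
        = ω ^ β • ((ω * u) ^ (-β) • R (ω * u)) := by
      intro u hu
      rw [Real.mul_rpow hω.le (le_of_lt hu), smul_smul]
      congr 1
      rw [← mul_assoc, ← Real.rpow_add hω, add_neg_cancel, Real.rpow_zero, one_mul]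
    rw [setIntegral_congr_fun measurableSet_Ioi hpt, integral_smul, hc, smul_smul]
    congr 1
    rw [Real.rpow_sub hω, Real.rpow_one, div_eq_mul_inv]
  calc ∫ s in Ioi (0:ℝ), s ^ (-γ) • R (ω * s ^ θ)
      = θ⁻¹ • ∫ s in Ioi (0:ℝ), θ • (s ^ (-γ) • R (ω * s ^ θ)) := by
        rw [integral_smul, inv_smul_smul₀ hθ.ne']
    _ = θ⁻¹ • ∫ s in Ioi (0:ℝ), (θ * s ^ (θ - 1)) • ((s ^ θ) ^ (-β) • R (ω * s ^ θ)) := by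
        rw [setIntegral_congr_fun measurableSet_Ioi fun s hs => (h2 s hs).symm]
    _ = θ⁻¹ • (ω ^ (β - 1) • ∫ u in Ioi (0:ℝ), u ^ (-β) • R u) := by rw [h1, h3]
    _ = ((1 / θ) * ω ^ (-((1 - γ) / θ)) * (π / Real.sin (π * β))) • negPow R β := by
        rw [negPow, smul_smul, smul_smul,
          show -((1 - γ) / θ) = β - 1 by rw [hβdef]; ring]
        congr 1
        field_simp [hsin, Real.pi_ne_zero, hθ.ne']
        ring_nf
        rw [mul_inv_cancel₀ (by rwa [mul_comm] : Real.sin (β * π) ≠ 0)]
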